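/- For every p in (0,1), the maximum of S_p on [0,1] equals 2^p/(6^p - 3^p), and it is attained exactly at the points x = 1/3 and x = 2/3; moreover S_p is not differentiable at x = 1/3 and at x = 2/3. -/

import Mathlib

open Real

noncomputable def T0 (x : ℝ) : ℝ := |x - round x|

noncomputable def S (p x : ℝ) : ℝ := ∑' n : ℕ, (T0 (2 ^ n * x) / 2 ^ n) ^ p

lemma T0_nonneg (x : ℝ) : 0 ≤ T0 x := abs_nonneg _

lemma T0_le_half (x : ℝ) : T0 x ≤ 1/2 := by
  simpa [T0] using abs_sub_round x

lemma T0_eq_min (x : ℝ) : T0 x = min (Int.fract x) (1 - Int.fract x) :=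
  abs_sub_round_eq_min x

lemma T0_two_mul (x : ℝ) : T0 (2*x) = min (2 * T0 x) (1 - 2 * T0 x) := by
  have h0 : (0:ℝ) ≤ Int.fract x := Int.fract_nonneg x
  have h1 : Int.fract x < 1 := Int.fract_lt_one x
  have h2x : Int.fract (2*x) = Int.fract (2 * Int.fract x) := by
    have h : (2:ℝ)*x = 2*Int.fract x + ((2*⌊x⌋ : ℤ):ℝ) := by
      rw [Int.fract]; push_cast; ring
    rw [h, Int.fract_add_intCast]
  rcases lt_or_ge (Int.fract x) (1/2) with h | h
  · have hf : Int.fract (2*x) = 2 * Int.fract x := by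
      rw [h2x, Int.fract_eq_self.2 ⟨by linarith, by linarith⟩]
    rw [T0_eq_min, T0_eq_min, hf]
    simp only [min_def]; split_ifs <;> linarith
  · have hf : Int.fract (2*x) = 2 * Int.fract x - 1 := by
      have h' : (2:ℝ) * Int.fract x = (2 * Int.fract x - 1) + ((1:ℤ):ℝ) := by
        push_cast; ring
      rw [h2x, h', Int.fract_add_intCast, Int.fract_eq_self.2 ⟨by linarith, by linarith⟩]
      push_cast; ring
    rw [T0_eq_min, T0_eq_min, hf]
    simp only [min_def]; split_ifs <;> linarith


section
variable {p : ℝ}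

noncomputable def rr (p : ℝ) : ℝ := ((1:ℝ)/2) ^ p

lemma rr_pos : 0 < rr p := rpow_pos_of_pos (by norm_num) p
lemma rr_lt_one (hp0 : 0 < p) : rr p < 1 :=
  rpow_lt_one (by norm_num) (by norm_num) hp0

lemma pow_rpow_eq (n : ℕ) : (((1:ℝ)/2) ^ n) ^ p = rr p ^ n := by
  rw [← Real.rpow_natCast (1/2 : ℝ) n, ← Real.rpow_mul (by norm_num), mul_comm,
    Real.rpow_mul (by norm_num), Real.rpow_natCast]
  rfl

lemma term_eq (n : ℕ) (y : ℝ) : (T0 y / 2 ^ n) ^ p = (T0 y) ^ p * rr p ^ n := by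
  have h : T0 y / 2 ^ n = T0 y * ((1:ℝ)/2) ^ n := by
    rw [one_div, inv_pow]; ring
  rw [h, Real.mul_rpow (T0_nonneg _) (by positivity), pow_rpow_eq]

lemma T0_rpow_le_one (hp0 : 0 < p) (y : ℝ) : (T0 y) ^ p ≤ 1 :=
  Real.rpow_le_one (T0_nonneg y) ((T0_le_half y).trans (by norm_num)) hp0.le

lemma summable_term (hp0 : 0 < p) (x : ℝ) :
    Summable (fun n : ℕ => (T0 (2 ^ n * x)) ^ p * rr p ^ n) := by
  refine Summable.of_nonneg_of_le
    (fun n => mul_nonneg (rpow_nonneg (T0_nonneg _) p) (pow_nonneg rr_pos.le n)) (fun n => ?_)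
    (summable_geometric_of_lt_one rr_pos.le (rr_lt_one hp0))
  calc (T0 (2 ^ n * x)) ^ p * rr p ^ n ≤ 1 * rr p ^ n := by
        exact mul_le_mul_of_nonneg_right (T0_rpow_le_one hp0 _) (pow_nonneg rr_pos.le n)
    _ = rr p ^ n := one_mul _

lemma S_eq (x : ℝ) : S p x = ∑' n : ℕ, (T0 (2 ^ n * x)) ^ p * rr p ^ n :=
  tsum_congr fun n => term_eq n _

lemma S_nonneg (x : ℝ) : 0 ≤ S p x := by
  rw [S_eq]
  exact tsum_nonneg fun n => mul_nonneg (rpow_nonneg (T0_nonneg _) p) (pow_nonneg rr_pos.le n)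

lemma S_le (hp0 : 0 < p) (x : ℝ) : S p x ≤ (1 - rr p)⁻¹ := by
  rw [S_eq]
  calc ∑' n : ℕ, (T0 (2 ^ n * x)) ^ p * rr p ^ n ≤ ∑' n : ℕ, rr p ^ n := by
        refine Summable.tsum_le_tsum (fun n => ?_) (summable_term hp0 x)
          (summable_geometric_of_lt_one rr_pos.le (rr_lt_one hp0))
        calc (T0 (2 ^ n * x)) ^ p * rr p ^ n ≤ 1 * rr p ^ n :=
            mul_le_mul_of_nonneg_right (T0_rpow_le_one hp0 _) (pow_nonneg rr_pos.le n)
          _ = rr p ^ n := one_mul _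
    _ = (1 - rr p)⁻¹ := tsum_geometric_of_lt_one rr_pos.le (rr_lt_one hp0)

lemma S_rec (hp0 : 0 < p) (x : ℝ) : S p x = (T0 x) ^ p + rr p * S p (2 * x) := by
  rw [S_eq, S_eq]
  rw [Summable.tsum_eq_zero_add (summable_term hp0 x)]
  congr 1
  · simp
  · rw [← tsum_mul_left]
    refine tsum_congr fun n => ?_
    have h2 : (2:ℝ) ^ (n + 1) * x = 2 ^ n * (2 * x) := by ring
    rw [h2, pow_succ]
    ring



lemma two_point_lt (hp0 : 0 < p) (hp1 : p < 1) {a b c d : ℝ} (ha : 0 ≤ a)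
    (hac : a < c) (hcd : c ≤ d) (habcd : a + b ≤ c + d) (hdb : d ≤ b) :
    a ^ p + b ^ p < c ^ p + d ^ p := by
  have hd0 : 0 ≤ d := le_trans (le_trans ha hac.le) hcd
  have hb0 : 0 ≤ b := hd0.trans hdb
  set B := c + d - a with hB
  have hbB : b ≤ B := by simp [hB]; linarith
  have h1 : b ^ p ≤ B ^ p := rpow_le_rpow hb0 hbB hp0.le
  have hdB : d < B := by simp [hB]; linarith
  have haB : a < B := by linarith
  have hBa : 0 < B - a := by linarith
  have hne : B - a ≠ 0 := ne_of_gt hBa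
  set l := (B - c)/(B - a) with hl'
  set m := (c - a)/(B - a) with hm'
  have hl : 0 < l := div_pos (by linarith) hBa
  have hm : 0 < m := div_pos (by linarith) hBa
  have hlm : l + m = 1 := by rw [hl', hm', ← add_div, div_eq_one_iff_eq hne]; ring
  have hc : c = l * a + m * B := by rw [hl', hm']; field_simp; ring
  have hd : d = m * a + l * B := by rw [hl', hm']; field_simp; ring
  have sc := Real.strictConcaveOn_rpow hp0 hp1
  have H1 := sc.2 (Set.mem_Ici.2 ha) (Set.mem_Ici.2 (by linarith : (0:ℝ) ≤ B))
    (ne_of_lt haB) hl hm hlm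
  have H2 := sc.2 (Set.mem_Ici.2 ha) (Set.mem_Ici.2 (by linarith : (0:ℝ) ≤ B))
    (ne_of_lt haB) hm hl (by linarith)
  simp only [smul_eq_mul] at H1 H2
  have hcp : l * a ^ p + m * B ^ p < c ^ p := by rw [hc]; exact H1
  have hdp : m * a ^ p + l * B ^ p < d ^ p := by rw [hd]; exact H2
  have key : (l * a ^ p + m * B ^ p) + (m * a ^ p + l * B ^ p) = a ^ p + B ^ p := by
    linear_combination (a ^ p + B ^ p) * hlm
  linarith

lemma two_point_le (hp0 : 0 < p) (hp1 : p < 1) {a b c d : ℝ} (ha : 0 ≤ a)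
    (hac : a ≤ c) (hcd : c ≤ d) (habcd : a + b ≤ c + d) (hdb : d ≤ b) :
    a ^ p + b ^ p ≤ c ^ p + d ^ p := by
  rcases eq_or_lt_of_le hac with rfl | h
  · have hb0 : 0 ≤ b := (le_trans (ha.trans hac) hcd).trans hdb
    have : b ^ p ≤ d ^ p := rpow_le_rpow hb0 (by linarith) hp0.le
    linarith
  · exact (two_point_lt hp0 hp1 ha h hcd habcd hdb).le


noncomputable def U (p s : ℝ) : ℝ := max 0 ((1 - s) ^ p - ((2:ℝ)/3) ^ p)

lemma U_nonneg (s : ℝ) : 0 ≤ U p s := le_max_left _ _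

lemma U_eq_zero (hp0 : 0 < p) {s : ℝ} (hs : 1/3 ≤ s) (hs1 : s ≤ 1) : U p s = 0 := by
  have h : (1 - s) ^ p ≤ ((2:ℝ)/3) ^ p :=
    rpow_le_rpow (by linarith) (by linarith) hp0.le
  simp [U, max_eq_left, sub_nonpos.2 h]

lemma U_eq (hp0 : 0 < p) {s : ℝ} (hs : s ≤ 1/3) : U p s = (1 - s) ^ p - ((2:ℝ)/3) ^ p := by
  have h : ((2:ℝ)/3) ^ p ≤ (1 - s) ^ p :=
    rpow_le_rpow (by norm_num) (by linarith) hp0.le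
  simp [U, max_eq_right, sub_nonneg.2 h]

lemma rr_mul (t : ℝ) (ht : 0 ≤ t) : rr p * (2 * t) ^ p = t ^ p := by
  rw [rr, ← Real.mul_rpow (by norm_num) (by linarith)]
  ring_nf

lemma rr_third : rr p * ((2:ℝ)/3) ^ p = ((1:ℝ)/3) ^ p := by
  rw [rr, ← Real.mul_rpow (by norm_num) (by norm_num)]
  norm_num

lemma step_lt (hp0 : 0 < p) (hp1 : p < 1) {t : ℝ} (ht0 : 0 ≤ t) (ht : t < 1/3) :
    U p t < (((1:ℝ)/3) ^ p - t ^ p) + rr p * U p (min (2*t) (1 - 2*t)) := by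
  have hUt : U p t = (1 - t) ^ p - ((2:ℝ)/3) ^ p := U_eq hp0 ht.le
  rcases le_or_gt t (1/6) with h6 | h6
  · -- min = 2t, U(2t) = (1-2t)^p - (2/3)^p
    have hmin : min (2*t) (1 - 2*t) = 2*t := min_eq_left (by linarith)
    have hU2 : U p (2*t) = (1 - 2*t) ^ p - ((2:ℝ)/3) ^ p := U_eq hp0 (by linarith)
    have hrw : rr p * ((1 - 2*t) ^ p - ((2:ℝ)/3) ^ p)
        = (1/2 - t) ^ p - ((1:ℝ)/3) ^ p := by
      rw [mul_sub, rr_third, show (1 - 2*t) = 2 * (1/2 - t) by ring, rr_mul _ (by linarith)]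
    rw [hmin, hU2, hUt, hrw]
    have hk : t ^ p + (1 - t) ^ p < (1/2 - t) ^ p + ((2:ℝ)/3) ^ p := by
      have := two_point_lt hp0 hp1 (a := t) (b := 1 - t) (c := 1/2 - t) (d := 2/3)
        ht0 (by linarith) (by linarith) (by linarith) (by linarith)
      linarith
    linarith
  · -- 1/6 < t < 1/3 : min ≥ 1/3 so U(min) = 0
    have hmin : 1/3 ≤ min (2*t) (1 - 2*t) := le_min (by linarith) (by linarith)
    have hmin1 : min (2*t) (1 - 2*t) ≤ 1 := (min_le_left _ _).trans (by linarith)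
    rw [U_eq_zero hp0 hmin hmin1, mul_zero, add_zero, hUt]
    have hk : t ^ p + (1 - t) ^ p < ((1:ℝ)/3) ^ p + ((2:ℝ)/3) ^ p := by
      have := two_point_lt hp0 hp1 (a := t) (b := 1 - t) (c := 1/3) (d := 2/3)
        ht0 ht (by norm_num) (by linarith) (by linarith)
      linarith
    linarith

lemma step (hp0 : 0 < p) (hp1 : p < 1) {t : ℝ} (ht0 : 0 ≤ t) (ht : t ≤ 1/2) :
    U p t ≤ (((1:ℝ)/3) ^ p - t ^ p) + rr p * U p (min (2*t) (1 - 2*t)) := by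
  rcases lt_or_ge t (1/3) with h | h
  · exact (step_lt hp0 hp1 ht0 h).le
  · -- t ∈ [1/3, 1/2] : equality
    have hUt : U p t = 0 := U_eq_zero hp0 h (by linarith)
    have hmin : min (2*t) (1 - 2*t) = 1 - 2*t := min_eq_right (by linarith)
    have hU2 : U p (1 - 2*t) = (2*t) ^ p - ((2:ℝ)/3) ^ p := by
      rw [U_eq hp0 (by linarith)]; ring_nf
    rw [hUt, hmin, hU2, mul_sub, rr_third, rr_mul _ ht0]
    linarith

end

section
variable {p : ℝ}

noncomputable def Mv (p : ℝ) : ℝ := ((1:ℝ)/3) ^ p * (1 - rr p)⁻¹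

lemma M_rec (hp0 : 0 < p) : Mv p = ((1:ℝ)/3) ^ p + rr p * Mv p := by
  have h : 1 - rr p ≠ 0 := ne_of_gt (by linarith [rr_lt_one hp0])
  rw [Mv]
  field_simp
  ring

lemma F_bddBelow (hp0 : 0 < p) :
    BddBelow (Set.range fun x : ℝ => Mv p - S p x - U p (T0 x)) := by
  refine ⟨Mv p - (1 - rr p)⁻¹ - 1, ?_⟩
  rintro y ⟨x, rfl⟩
  have h1 : S p x ≤ (1 - rr p)⁻¹ := S_le hp0 x
  have h2 : U p (T0 x) ≤ 1 := by
    rw [U]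
    refine max_le (by norm_num) ?_
    have : (1 - T0 x) ^ p ≤ 1 :=
      Real.rpow_le_one (by linarith [T0_le_half x]) (by linarith [T0_nonneg x]) hp0.le
    have : (0:ℝ) < ((2:ℝ)/3) ^ p := rpow_pos_of_pos (by norm_num) p
    linarith
  simp only
  linarith

lemma F_step (hp0 : 0 < p) (hp1 : p < 1) (x : ℝ) :
    rr p * (Mv p - S p (2*x) - U p (T0 (2*x))) ≤ Mv p - S p x - U p (T0 x) := by
  have hrec := S_rec hp0 x
  have hM := M_rec hp0
  have hstep := step hp0 hp1 (T0_nonneg x) (T0_le_half x)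
  rw [← T0_two_mul x] at hstep
  nlinarith [hstep]

lemma main_bound (hp0 : 0 < p) (hp1 : p < 1) (x : ℝ) :
    S p x + U p (T0 x) ≤ Mv p := by
  set F : ℝ → ℝ := fun x => Mv p - S p x - U p (T0 x) with hF
  have hbdd := F_bddBelow hp0
  set m := ⨅ y : ℝ, F y with hm
  have hle : ∀ y : ℝ, m ≤ F y := fun y => ciInf_le hbdd y
  have hrm : rr p * m ≤ m := by
    rw [hm]
    refine le_ciInf fun y => ?_
    calc rr p * m ≤ rr p * F (2*y) :=
          mul_le_mul_of_nonneg_left (hle (2*y)) rr_pos.le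
      _ ≤ F y := F_step hp0 hp1 y
  have hm0 : 0 ≤ m := by nlinarith [rr_lt_one hp0, rr_pos (p := p)]
  have := hle x
  simp only [hF] at this
  linarith

end

section
variable {p : ℝ}

lemma gap (hp0 : 0 < p) (hp1 : p < 1) (x : ℝ) :
    ((1:ℝ)/3) ^ p - (T0 x) ^ p ≤ Mv p - S p x := by
  have hrec := S_rec hp0 x
  have hM := M_rec hp0
  have h2 := main_bound hp0 hp1 (2*x)
  have hU : 0 ≤ U p (T0 (2*x)) := U_nonneg _
  nlinarith [rr_pos (p := p)]

lemma lt_M (hp0 : 0 < p) (hp1 : p < 1) {x : ℝ} (h : T0 x ≠ 1/3) :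
    S p x < Mv p := by
  have ht0 := T0_nonneg x
  have ht2 := T0_le_half x
  rcases lt_trichotomy (T0 x) (1/3) with hlt | heq | hgt
  · -- T0 x < 1/3
    have hrec := S_rec hp0 x
    have hM := M_rec hp0
    have h2 := main_bound hp0 hp1 (2*x)
    have hstep := step_lt hp0 hp1 ht0 hlt
    rw [← T0_two_mul x] at hstep
    have hU : 0 ≤ U p (T0 x) := U_nonneg _
    nlinarith [rr_pos (p := p)]
  · exact absurd heq h
  · -- T0 x > 1/3
    have hrec := S_rec hp0 x
    have hM := M_rec hp0
    set t := T0 x with htdef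
    have ht1 : T0 (2*x) = 1 - 2*t := by
      rw [T0_two_mul x, min_eq_right (by linarith)]
    have ht1lt : T0 (2*x) < 1/3 := by rw [ht1]; linarith
    have ht1n : 0 ≤ T0 (2*x) := T0_nonneg _
    -- strict bound at 2x
    have hrec2 := S_rec hp0 (2*x)
    have h4 := main_bound hp0 hp1 (2*(2*x))
    have hstep2 := step_lt hp0 hp1 ht1n ht1lt
    rw [← T0_two_mul (2*x)] at hstep2
    have hgap2 : U p (T0 (2*x)) < Mv p - S p (2*x) := by
      have hU4 : 0 ≤ U p (T0 (2*(2*x))) := U_nonneg _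
      nlinarith [rr_pos (p := p)]
    have hU1 : U p (T0 (2*x)) = (2*t) ^ p - ((2:ℝ)/3) ^ p := by
      rw [ht1, U_eq hp0 (by linarith)]; ring_nf
    have hcomp : rr p * ((2*t) ^ p - ((2:ℝ)/3) ^ p) = t ^ p - ((1:ℝ)/3) ^ p := by
      rw [mul_sub, rr_third, rr_mul _ ht0]
    have h5 : rr p * U p (T0 (2*x)) < rr p * (Mv p - S p (2*x)) :=
      mul_lt_mul_of_pos_left hgap2 rr_pos
    rw [hU1, hcomp] at h5
    linarith

end

section
variable {p : ℝ}

lemma T0_third : T0 (1/3 : ℝ) = 1/3 := by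
  have h : round ((1:ℝ)/3) = 0 := by norm_num [round_eq]
  rw [T0, h]
  norm_num

lemma T0_pow_third (n : ℕ) : T0 ((2:ℝ) ^ n * (1/3)) = 1/3 := by
  induction n with
  | zero => simpa using T0_third
  | succ n ih =>
    have h : (2:ℝ) ^ (n+1) * (1/3) = 2 * ((2:ℝ) ^ n * (1/3)) := by ring
    rw [h, T0_two_mul, ih]
    norm_num

lemma T0_pow_two_third (n : ℕ) : T0 ((2:ℝ) ^ n * (2/3)) = 1/3 := by
  have h : (2:ℝ) ^ n * (2/3) = (2:ℝ) ^ (n+1) * (1/3) := by ring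
  rw [h, T0_pow_third]

lemma S_third (hp0 : 0 < p) : S p (1/3) = Mv p := by
  rw [S_eq]
  have h : ∀ n : ℕ, (T0 ((2:ℝ) ^ n * (1/3))) ^ p * rr p ^ n
      = ((1:ℝ)/3) ^ p * rr p ^ n := fun n => by rw [T0_pow_third]
  rw [tsum_congr h, tsum_mul_left, tsum_geometric_of_lt_one rr_pos.le (rr_lt_one hp0)]
  rfl

lemma S_two_third (hp0 : 0 < p) : S p (2/3) = Mv p := by
  rw [S_eq]
  have h : ∀ n : ℕ, (T0 ((2:ℝ) ^ n * (2/3))) ^ p * rr p ^ n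
      = ((1:ℝ)/3) ^ p * rr p ^ n := fun n => by rw [T0_pow_two_third]
  rw [tsum_congr h, tsum_mul_left, tsum_geometric_of_lt_one rr_pos.le (rr_lt_one hp0)]
  rfl

lemma M_val (hp0 : 0 < p) : Mv p = 2 ^ p / (6 ^ p - 3 ^ p) := by
  have h2 : (0:ℝ) < 2 ^ p := rpow_pos_of_pos (by norm_num) p
  have h3 : (0:ℝ) < 3 ^ p := rpow_pos_of_pos (by norm_num) p
  have h6 : (6:ℝ) ^ p = 2 ^ p * 3 ^ p := by
    rw [← Real.mul_rpow (by norm_num) (by norm_num)]; norm_num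
  have h13 : ((1:ℝ)/3) ^ p = 1 / 3 ^ p := by
    rw [Real.div_rpow (by norm_num) (by norm_num), Real.one_rpow]
  have h12 : rr p = 1 / 2 ^ p := by
    rw [rr, Real.div_rpow (by norm_num) (by norm_num), Real.one_rpow]
  have h21 : (1:ℝ) < 2 ^ p := Real.one_lt_rpow_iff_of_pos (by norm_num) |>.2 (Or.inl ⟨by norm_num, hp0⟩)
  rw [Mv, h13, h12, h6]
  have hne : (1:ℝ) - 1/2^p ≠ 0 := by
    have : (1:ℝ)/2^p < 1 := by rw [div_lt_one h2]; exact h21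
    linarith
  field_simp

end

section
variable {p : ℝ}

lemma lin_bound (hp0 : 0 < p) (hp1 : p < 1) {t : ℝ} (ht0 : 0 ≤ t) (ht : t ≤ 1/3) :
    ((1:ℝ)/3) ^ p * (p * (1 - 3*t)) ≤ ((1:ℝ)/3) ^ p - t ^ p := by
  have h1 : ((3:ℝ)*t) ^ p ≤ 1 + p * (3*t - 1) := by
    have h := rpow_one_add_le_one_add_mul_self (s := 3*t - 1) (by linarith) hp0.le hp1.le
    rw [show (1:ℝ) + (3*t - 1) = 3*t by ring] at h
    exact h
  have h2 : t ^ p = ((1:ℝ)/3) ^ p * (3*t) ^ p := by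
    rw [← Real.mul_rpow (by norm_num) (by linarith), show (1/3:ℝ)*(3*t) = t by ring]
  have h3 : (0:ℝ) < ((1:ℝ)/3) ^ p := rpow_pos_of_pos (by norm_num) p
  nlinarith

lemma T0_of_Ico {y : ℝ} (h0 : 0 ≤ y) (h1 : y < 1) : T0 y = min y (1 - y) := by
  rw [T0_eq_min, Int.fract_eq_self.2 ⟨h0, h1⟩]

lemma not_diff_third (hp0 : 0 < p) (hp1 : p < 1) : ¬ DifferentiableAt ℝ (S p) (1/3) := by
  intro h
  have hd : HasDerivAt (S p) (deriv (S p) (1/3)) (1/3) := h.hasDerivAt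
  rw [hasDerivAt_iff_tendsto_slope] at hd
  set L := deriv (S p) (1/3) with hL
  set c := ((1:ℝ)/3) ^ p * (p * 3) with hc
  have hcpos : 0 < c := by
    have : (0:ℝ) < ((1:ℝ)/3) ^ p := rpow_pos_of_pos (by norm_num) p
    positivity
  have hsub1 : (Set.Ioi (1/3:ℝ)) ⊆ {(1/3:ℝ)}ᶜ := fun y hy => ne_of_gt hy
  have hsub2 : (Set.Iio (1/3:ℝ)) ⊆ {(1/3:ℝ)}ᶜ := fun y hy => ne_of_lt hy
  have hR : Filter.Tendsto (slope (S p) (1/3)) (nhdsWithin (1/3) (Set.Ioi (1/3))) (nhds L) :=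
    hd.mono_left (nhdsWithin_mono _ hsub1)
  have hLf : Filter.Tendsto (slope (S p) (1/3)) (nhdsWithin (1/3) (Set.Iio (1/3))) (nhds L) :=
    hd.mono_left (nhdsWithin_mono _ hsub2)
  have hL1 : L ≤ 0 := by
    refine le_of_tendsto hR ?_
    filter_upwards [self_mem_nhdsWithin] with y hy
    have hSy : S p y ≤ Mv p := by
      have h1 := main_bound hp0 hp1 y
      have h2 := U_nonneg (p := p) (T0 y)
      linarith
    rw [slope_def_field, S_third hp0]
    apply div_nonpos_of_nonpos_of_nonneg
    · linarith
    · have : (1/3:ℝ) < y := hy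
      linarith
  have hL2 : c ≤ L := by
    refine ge_of_tendsto hLf ?_
    filter_upwards [Ioo_mem_nhdsLT_of_mem (by norm_num : (1/3:ℝ) ∈ Set.Ioc (1/4) (1/3))]
      with y hy
    obtain ⟨hy1, hy2⟩ := hy
    have hT : T0 y = y := by
      rw [T0_of_Ico (by linarith) (by linarith), min_eq_left (by linarith)]
    have hgap := gap hp0 hp1 y
    rw [hT] at hgap
    have hlin := lin_bound hp0 hp1 (t := y) (by linarith) (by linarith)
    rw [slope_def_field, S_third hp0]
    rw [le_div_iff_of_neg (by linarith : y - 1/3 < 0)]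
    nlinarith
  linarith

lemma not_diff_two_third (hp0 : 0 < p) (hp1 : p < 1) :
    ¬ DifferentiableAt ℝ (S p) (2/3) := by
  intro h
  have hd : HasDerivAt (S p) (deriv (S p) (2/3)) (2/3) := h.hasDerivAt
  rw [hasDerivAt_iff_tendsto_slope] at hd
  set L := deriv (S p) (2/3) with hL
  set c := ((1:ℝ)/3) ^ p * (p * 3) with hc
  have hcpos : 0 < c := by
    have : (0:ℝ) < ((1:ℝ)/3) ^ p := rpow_pos_of_pos (by norm_num) p
    positivity
  have hsub1 : (Set.Ioi (2/3:ℝ)) ⊆ {(2/3:ℝ)}ᶜ := fun y hy => ne_of_gt hy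
  have hsub2 : (Set.Iio (2/3:ℝ)) ⊆ {(2/3:ℝ)}ᶜ := fun y hy => ne_of_lt hy
  have hR : Filter.Tendsto (slope (S p) (2/3)) (nhdsWithin (2/3) (Set.Ioi (2/3))) (nhds L) :=
    hd.mono_left (nhdsWithin_mono _ hsub1)
  have hLf : Filter.Tendsto (slope (S p) (2/3)) (nhdsWithin (2/3) (Set.Iio (2/3))) (nhds L) :=
    hd.mono_left (nhdsWithin_mono _ hsub2)
  have hL1 : 0 ≤ L := by
    refine ge_of_tendsto hLf ?_
    filter_upwards [self_mem_nhdsWithin] with y hy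
    have hSy : S p y ≤ Mv p := by
      have h1 := main_bound hp0 hp1 y
      have h2 := U_nonneg (p := p) (T0 y)
      linarith
    rw [slope_def_field, S_two_third hp0]
    apply div_nonneg_of_nonpos
    · linarith
    · have : y < (2/3:ℝ) := hy
      linarith
  have hL2 : L ≤ -c := by
    refine le_of_tendsto hR ?_
    filter_upwards [Ioo_mem_nhdsGT_of_mem (by norm_num : (2/3:ℝ) ∈ Set.Ico (2/3) (3/4))]
      with y hy
    obtain ⟨hy1, hy2⟩ := hy
    have hT : T0 y = 1 - y := by
      rw [T0_of_Ico (by linarith) (by linarith), min_eq_right (by linarith)]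
    have hgap := gap hp0 hp1 y
    rw [hT] at hgap
    have hlin := lin_bound hp0 hp1 (t := 1 - y) (by linarith) (by linarith)
    rw [slope_def_field, S_two_third hp0]
    rw [div_le_iff₀ (by linarith : (0:ℝ) < y - 2/3)]
    nlinarith
  linarith

end

lemma eq_third_of_T0 {x : ℝ} (hx0 : 0 ≤ x) (hx1 : x ≤ 1) (hT : T0 x = 1/3) :
    x = 1/3 ∨ x = 2/3 := by
  rcases lt_or_ge x (1/2) with h | h
  · have hr : round x = 0 := by
      rw [round_eq, Int.floor_eq_zero_iff]
      exact ⟨by linarith, by linarith⟩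
    rw [T0, hr] at hT
    simp only [Int.cast_zero, sub_zero] at hT
    rcases (abs_eq (by norm_num : (0:ℝ) ≤ 1/3)).1 hT with h' | h'
    · exact Or.inl h'
    · linarith
  · have hr : round x = 1 := by
      rw [round_eq]
      rw [Int.floor_eq_iff]
      constructor
      · push_cast; linarith
      · push_cast; linarith
    rw [T0, hr] at hT
    rcases (abs_eq (by norm_num : (0:ℝ) ≤ 1/3)).1 hT with h' | h'
    · push_cast at h'; linarith
    · push_cast at h'; right; linarith

theorem stmt_19 (p : ℝ) (hp0 : 0 < p) (hp1 : p < 1) :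
    (∀ x ∈ Set.Icc (0 : ℝ) 1, S p x ≤ 2 ^ p / (6 ^ p - 3 ^ p)) ∧
    (∀ x ∈ Set.Icc (0 : ℝ) 1,
      (S p x = 2 ^ p / (6 ^ p - 3 ^ p) ↔ x = 1 / 3 ∨ x = 2 / 3)) ∧
    ¬ DifferentiableAt ℝ (S p) (1 / 3) ∧ ¬ DifferentiableAt ℝ (S p) (2 / 3) := by
  have hM := M_val (p := p) hp0
  refine ⟨?_, ?_, not_diff_third hp0 hp1, not_diff_two_third hp0 hp1⟩
  · intro x _
    rw [← hM]
    have h1 := main_bound hp0 hp1 x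
    have h2 := U_nonneg (p := p) (T0 x)
    linarith
  · rintro x ⟨hx0, hx1⟩
    constructor
    · intro hSx
      rw [← hM] at hSx
      have hT : T0 x = 1/3 := by
        by_contra hT
        have := lt_M hp0 hp1 hT
        linarith
      exact eq_third_of_T0 hx0 hx1 hT
    · rintro (rfl | rfl)
      · rw [S_third hp0, hM]
      · rw [S_two_third hp0, hM]
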